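/- A nonnegative n×n matrix A is doubly stochastic if and only if A can be written as a convex combination A = ∑_i λ_i P_i of permutation matrices P_i with λ_i ≥ 0 and ∑_i λ_i = 1 (Birkhoff–von Neumann theorem). -/

import Mathlib

/-- Birkhoff–von Neumann: a nonnegative matrix is doubly stochastic iff it is a
convex combination of permutation matrices. -/
theorem doubly_stochastic_iff_convex_comb_of_permutations {n : ℕ}
    (A : Matrix (Fin n) (Fin n) ℝ) (hnn : ∀ i j, 0 ≤ A i j) :
    ((∀ i, ∑ j, A i j = 1) ∧ (∀ j, ∑ i, A i j = 1)) ↔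
    ∃ (k : ℕ) (w : Fin k → ℝ) (σ : Fin k → Equiv.Perm (Fin n)),
      (∀ m, 0 ≤ w m) ∧ (∑ m, w m = 1) ∧
      A = ∑ m, w m • (fun i j => if σ m i = j then (1 : ℝ) else 0) := by
  constructor
  · rintro ⟨hr, hc⟩
    have hA : A ∈ doublyStochastic ℝ (Fin n) :=
      mem_doublyStochastic_iff_sum.2 ⟨hnn, hr, hc⟩
    obtain ⟨w, hw0, hw1, hwA⟩ := exists_eq_sum_perm_of_mem_doublyStochastic hA
    let e := (Fintype.equivFin (Equiv.Perm (Fin n))).symm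
    refine ⟨Fintype.card (Equiv.Perm (Fin n)), fun m => w (e m), fun m => e m,
      fun m => hw0 _, ?_, ?_⟩
    · rw [Fintype.sum_equiv e (fun m => w (e m)) w (fun m => rfl)]
      exact hw1
    · rw [← hwA, Fintype.sum_equiv e]
      · rfl
      intro σ
      congr 1
      ext i j
      simp [Equiv.Perm.permMatrix, PEquiv.toMatrix_apply, Equiv.toPEquiv_apply, eq_comm]
  · rintro ⟨k, w, σ, hw0, hw1, rfl⟩
    constructor
    · intro i
      simp only [Finset.sum_apply, Pi.smul_apply]
      rw [Finset.sum_comm]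
      calc ∑ m, ∑ j, (w m • fun j => if σ m i = j then (1:ℝ) else 0) j
          = ∑ m, w m := by
            refine Finset.sum_congr rfl fun m _ => ?_
            simp [Finset.sum_ite_eq]
        _ = 1 := hw1
    · intro j
      simp only [Finset.sum_apply, Pi.smul_apply]
      rw [Finset.sum_comm]
      calc ∑ m, ∑ i, (w m • fun j => if σ m i = j then (1:ℝ) else 0) j
          = ∑ m, w m := by
            refine Finset.sum_congr rfl fun m _ => ?_
            simp only [Pi.smul_apply, smul_eq_mul, mul_ite, mul_one, mul_zero]
            rw [Finset.sum_eq_single ((σ m).symm j)] <;> simp +contextual [Equiv.apply_eq_iff_eq_symm_apply]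
        _ = 1 := hw1
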